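/- The word xysxzytz is an isoterm for the join of the variety generated by the factor monoid M(xzxyty) and the variety N: if v is a word such that (xysxzytz, v) ∈ Th(M(xzxyty)) ∩ θ_N (i.e., the identity xysxzytz ≈ v holds both in M(xzxyty) and in every monoid of the variety N), then v = xysxzytz. -/

import Mathlib

/-! ## Words over a countably infinite alphabet -/

/-- `Word` is the free monoid `F` over the countably infinite alphabet `X = ℕ`. -/
abbrev Word : Type := FreeMonoid ℕ

/-- The letter with index `i`, as a one-letter word. -/
def ltr (i : ℕ) : Word := FreeMonoid.of i

/-- The distinguished letters `x`, `y`, `z`, `t`, `s`. -/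
def wx : Word := ltr 0
def wy : Word := ltr 1
def wz : Word := ltr 2
def wt : Word := ltr 3
def ws : Word := ltr 4

/-- The letters `z_i` for `i ≥ 1` (distinct from `x,y,z,t,s` and from all `t_j`). -/
def wzi (i : ℕ) : Word := ltr (2 * i + 10)

/-- The letters `t_i` for `i ≥ 1`. -/
def wti (i : ℕ) : Word := ltr (2 * i + 11)

/-- `pr a len f = f (a+1) * f (a+2) * ⋯ * f (a+len)`, i.e. `∏_{i=a+1}^{a+len} f i`. -/
def pr (a len : ℕ) (f : ℕ → Word) : Word :=
  ((List.range len).map (fun i => f (a + 1 + i))).prod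

/-- The word `u` read from right to left. -/
def revW (u : Word) : Word := FreeMonoid.ofList (FreeMonoid.toList u).reverse

/-- `ρ : ℕ → ℕ` is (restricts to) a permutation of `{1,…,N}`. -/
def IsPermOn (ρ : ℕ → ℕ) (N : ℕ) : Prop :=
  Set.BijOn ρ (Set.Icc 1 N) (Set.Icc 1 N)

/-- `ρ` is a `(p,q)`-permutation: a permutation of `{1,…,p+q}` such that for each
`i = 1,…,p+q-1` exactly one of `ρ i`, `ρ (i+1)` lies in `{1,…,p}`. -/
def IsPQPerm (ρ : ℕ → ℕ) (p q : ℕ) : Prop :=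
  IsPermOn ρ (p + q) ∧
    ∀ i : ℕ, 1 ≤ i → i < p + q → (ρ i ∈ Set.Icc 1 p ↔ ¬ ρ (i + 1) ∈ Set.Icc 1 p)

/-- `(n,m) ∈ N̂₀²`, i.e. `|n - m| ≤ 1`. -/
def InHatN (n m : ℕ) : Prop := n ≤ m + 1 ∧ m ≤ n + 1

/-! ## The words `a_{n,m}[ρ]`, `c_{n,m,k}[τ]`, `d_{n,m,k}[τ]` and friends -/

/-- `a_{n,m}[ρ] = (∏_{i=1}^n z_i t_i) x (∏_{i=1}^{n+m} z_{iρ}) x (∏_{i=n+1}^{n+m} t_i z_i)`. -/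
def wordA (n m : ℕ) (ρ : ℕ → ℕ) : Word :=
  pr 0 n (fun i => wzi i * wti i) * wx * pr 0 (n + m) (fun i => wzi (ρ i)) * wx *
    pr n m (fun i => wti i * wzi i)

/-- `a'_{n,m}[ρ] = (∏_{i=1}^n z_i t_i) x² (∏_{i=1}^{n+m} z_{iρ}) (∏_{i=n+1}^{n+m} t_i z_i)`. -/
def wordA' (n m : ℕ) (ρ : ℕ → ℕ) : Word :=
  pr 0 n (fun i => wzi i * wti i) * (wx * wx) * pr 0 (n + m) (fun i => wzi (ρ i)) *
    pr n m (fun i => wti i * wzi i)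

/-- `â_{n,m}[ρ]`: the word `a_{n,m}[ρ]` with both occurrences of `x` deleted. -/
def hatA (n m : ℕ) (ρ : ℕ → ℕ) : Word :=
  pr 0 n (fun i => wzi i * wti i) * pr 0 (n + m) (fun i => wzi (ρ i)) *
    pr n m (fun i => wti i * wzi i)

/-- `c_{n,m,k}[τ]`. -/
def wordC (n m k : ℕ) (τ : ℕ → ℕ) : Word :=
  pr 0 n (fun i => wzi i * wti i) * (wx * wy * wt) * pr n m (fun i => wzi i * wti i) * wx *
    pr 0 (n + m + k) (fun i => wzi (τ i)) * wy * pr (n + m) k (fun i => wti i * wzi i)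

/-- `c'_{n,m,k}[τ]` (the factor `xyt` of `c_{n,m,k}[τ]` replaced by `yxt`). -/
def wordC' (n m k : ℕ) (τ : ℕ → ℕ) : Word :=
  pr 0 n (fun i => wzi i * wti i) * (wy * wx * wt) * pr n m (fun i => wzi i * wti i) * wx *
    pr 0 (n + m + k) (fun i => wzi (τ i)) * wy * pr (n + m) k (fun i => wti i * wzi i)

/-- `d_{n,m,k}[τ]`: the word `c_{n,m,k}[τ]` read from right to left. -/
def wordD (n m k : ℕ) (τ : ℕ → ℕ) : Word := revW (wordC n m k τ)

/-- `d'_{n,m,k}[τ]`: the word `c'_{n,m,k}[τ]` read from right to left. -/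
def wordD' (n m k : ℕ) (τ : ℕ → ℕ) : Word := revW (wordC' n m k τ)

/-! ## Fully invariant congruences -/

/-- `θ` is a fully invariant congruence on the free monoid `F`. -/
structure IsFIC (θ : Word → Word → Prop) : Prop where
  refl : ∀ u, θ u u
  symm : ∀ {u v}, θ u v → θ v u
  trans : ∀ {u v w}, θ u v → θ v w → θ u w
  mul : ∀ {u₁ v₁ u₂ v₂}, θ u₁ v₁ → θ u₂ v₂ → θ (u₁ * u₂) (v₁ * v₂)
  subst : ∀ (σ : Word →* Word) {u v}, θ u v → θ (σ u) (σ v)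

/-- Containment of binary relations (sets of identities). -/
def RelLe (S θ : Word → Word → Prop) : Prop := ∀ u v, S u v → θ u v

/-- `⟨S⟩`: the least fully invariant congruence containing the set `S` of identities. -/
def ficGen (S : Word → Word → Prop) : Word → Word → Prop :=
  fun u v => ∀ θ : Word → Word → Prop, IsFIC θ → RelLe S θ → θ u v

/-- Intersection of two relations: the meet in the lattice of fully invariant congruences. -/
def RelMeet (θ₁ θ₂ : Word → Word → Prop) : Word → Word → Prop := fun u v => θ₁ u v ∧ θ₂ u v

/-- The join of two fully invariant congruences. -/
def ficJoin (θ₁ θ₂ : Word → Word → Prop) : Word → Word → Prop :=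
  ficGen (fun u v => θ₁ u v ∨ θ₂ u v)

/-- The lattice of all fully invariant congruences on `F` containing `θ` is distributive
(meets in this lattice are intersections, joins are generated joins). -/
def FICLatDistrib (θ : Word → Word → Prop) : Prop :=
  ∀ a b c : Word → Word → Prop, IsFIC a → IsFIC b → IsFIC c →
    RelLe θ a → RelLe θ b → RelLe θ c →
      ∀ u v, RelMeet a (ficJoin b c) u v ↔ ficJoin (RelMeet a b) (RelMeet a c) u v

/-- The lattice of all fully invariant congruences on `F` containing `θ` is modular. -/
def FICLatModular (θ : Word → Word → Prop) : Prop :=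
  ∀ a b c : Word → Word → Prop, IsFIC a → IsFIC b → IsFIC c →
    RelLe θ a → RelLe θ b → RelLe θ c → RelLe a c →
      ∀ u v, ficJoin a (RelMeet b c) u v ↔ RelMeet (ficJoin a b) c u v

/-! ## Satisfaction and factor monoids -/

/-- The monoid `M` satisfies the identity `u ≈ v`. -/
def MSat (M : Type) [Monoid M] (u v : Word) : Prop := ∀ f : Word →* M, f u = f v

/-- The underlying type of the factor monoid `M(w)`: all factors (contiguous subwords)
of `w` together with an extra zero element (`none`). -/
abbrev Factor (w : List ℕ) : Type := Option { u : List ℕ // u <:+: w }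

namespace Factor

variable {w : List ℕ}

instance : One (Factor w) := ⟨some ⟨[], List.nil_infix⟩⟩

instance : Mul (Factor w) :=
  ⟨fun a b =>
    match a, b with
    | none, _ => none
    | some _, none => none
    | some u, some v => if h : (u.1 ++ v.1) <:+: w then some ⟨u.1 ++ v.1, h⟩ else none⟩

theorem none_mul (a : Factor w) : (none : Factor w) * a = none := rfl

theorem mul_none (a : Factor w) : a * (none : Factor w) = none := by cases a <;> rfl

theorem some_mul_some (u v : { u : List ℕ // u <:+: w }) :
    (some u : Factor w) * some v =
      if h : (u.1 ++ v.1) <:+: w then some ⟨u.1 ++ v.1, h⟩ else none := rfl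

theorem one_def : (1 : Factor w) = some ⟨[], List.nil_infix⟩ := rfl

private theorem infix_left {u v : List ℕ} (h : (u ++ v) <:+: w) : u <:+: w :=
  (List.prefix_append u v).isInfix.trans h

private theorem infix_right {u v : List ℕ} (h : (u ++ v) <:+: w) : v <:+: w :=
  (List.suffix_append u v).isInfix.trans h

instance : Monoid (Factor w) where
  mul_assoc a b c := by
    rcases a with _ | u
    · simp [none_mul]
    rcases b with _ | v
    · rw [mul_none, none_mul, mul_none]
    rcases c with _ | t
    · rw [mul_none, mul_none, mul_none]
    by_cases h : (u.1 ++ (v.1 ++ t.1)) <:+: w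
    · have h' : ((u.1 ++ v.1) ++ t.1) <:+: w := by rwa [List.append_assoc]
      have huv : (u.1 ++ v.1) <:+: w := by
        refine infix_left (v := t.1) ?_; rwa [List.append_assoc]
      have hvt : (v.1 ++ t.1) <:+: w := infix_right h
      rw [some_mul_some u v, dif_pos huv, some_mul_some v t, dif_pos hvt,
        some_mul_some, dif_pos h', some_mul_some, dif_pos h]
      exact congrArg some (Subtype.ext (List.append_assoc _ _ _))
    · have h' : ¬ ((u.1 ++ v.1) ++ t.1) <:+: w := by rwa [List.append_assoc]
      rw [some_mul_some u v, some_mul_some v t]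
      by_cases huv : (u.1 ++ v.1) <:+: w
      · rw [dif_pos huv]
        by_cases hvt : (v.1 ++ t.1) <:+: w
        · rw [dif_pos hvt, some_mul_some, dif_neg h', some_mul_some, dif_neg h]
        · rw [dif_neg hvt, some_mul_some, dif_neg h', mul_none]
      · rw [dif_neg huv, none_mul]
        by_cases hvt : (v.1 ++ t.1) <:+: w
        · rw [dif_pos hvt, some_mul_some, dif_neg h]
        · rw [dif_neg hvt, mul_none]
  one_mul a := by
    rcases a with _ | u
    · rw [mul_none]
    · rw [one_def, some_mul_some, dif_pos (by simpa using u.2)]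
      exact congrArg some (Subtype.ext (List.nil_append _))
  mul_one a := by
    rcases a with _ | u
    · rw [none_mul]
    · rw [one_def, some_mul_some, dif_pos (by simpa using u.2)]
      exact congrArg some (Subtype.ext (List.append_nil _))

end Factor

/-- `Th(M(w))`: the set of identities holding in the factor monoid `M(w)`. -/
def ThFM (w : List ℕ) : Word → Word → Prop :=
  fun u v => ∀ f : Word →* Factor w, f u = f v

/-! ## Distinguished identities and sets of identities -/

/-- The identity `α : xzytxy ≈ xzytyx` (as a pair of words). -/
def idAlphaL : Word := wx * wz * wy * wt * wx * wy
def idAlphaR : Word := wx * wz * wy * wt * wy * wx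

/-- The identity `β : xzxyty ≈ xzyxty`. -/
def idBetaL : Word := wx * wz * wx * wy * wt * wy
def idBetaR : Word := wx * wz * wy * wx * wt * wy

/-- The set of identities defining the variety `N`:
`{x² ≈ x³, x²y ≈ yx², xyxzx ≈ x²yz, α, β}`. -/
def SigmaN : Word → Word → Prop := fun u v =>
  (u = wx ^ 2 ∧ v = wx ^ 3) ∨
  (u = wx ^ 2 * wy ∧ v = wy * wx ^ 2) ∨
  (u = wx * wy * wx * wz * wx ∧ v = wx ^ 2 * wy * wz) ∨
  (u = idAlphaL ∧ v = idAlphaR) ∨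
  (u = idBetaL ∧ v = idBetaR)

/-- `θ_N = ⟨Σ_N⟩`: the fully invariant congruence of the variety `N`. -/
def thetaN : Word → Word → Prop := ficGen SigmaN

/-- The set `Σ_P(n)` of identities defining the variety `P_n`. -/
def SigmaP (n : ℕ) : Word → Word → Prop := fun u v =>
  (u = wx ^ n ∧ v = wx ^ (n + 1)) ∨
  (u = wx ^ 2 * wy ∧ v = wy * wx ^ 2) ∨
  (∃ (k l : ℕ) (ρ : ℕ → ℕ), IsPermOn ρ (k + l) ∧ u = wordA k l ρ ∧ v = wordA' k l ρ) ∨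
  (∃ (k l m : ℕ) (τ : ℕ → ℕ), IsPermOn τ (k + l + m) ∧ u = wordC k l m τ ∧ v = wordC' k l m τ) ∨
  (∃ (k l m : ℕ) (τ : ℕ → ℕ), IsPermOn τ (k + l + m) ∧ u = wordD k l m τ ∧ v = wordD' k l m τ)

/-- The set `Σ_Q(n) = {x^n ≈ x^{n+1}, x^n y ≈ y x^n, x²y ≈ xyx}`. -/
def SigmaQ (n : ℕ) : Word → Word → Prop := fun u v =>
  (u = wx ^ n ∧ v = wx ^ (n + 1)) ∨
  (u = wx ^ n * wy ∧ v = wy * wx ^ n) ∨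
  (u = wx ^ 2 * wy ∧ v = wx * wy * wx)

/-- The set `Σ_R(n) = {x^n ≈ x^{n+1}, x²y ≈ yx², α, β}`. -/
def SigmaR (n : ℕ) : Word → Word → Prop := fun u v =>
  (u = wx ^ n ∧ v = wx ^ (n + 1)) ∨
  (u = wx ^ 2 * wy ∧ v = wy * wx ^ 2) ∨
  (u = idAlphaL ∧ v = idAlphaR) ∨
  (u = idBetaL ∧ v = idBetaR)

/-- `Σ^δ`: the set of reversed identities (both sides read from right to left). -/
def SigmaDual (S : Word → Word → Prop) : Word → Word → Prop :=
  fun u v => ∃ a b, S a b ∧ u = revW a ∧ v = revW b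

/-- Left-hand side of the identity `δ_{n,m}`: `x^m t₁ x t₂ x ⋯ t_n x`. -/
def deltaL (n m : ℕ) : Word := wx ^ m * ((List.range n).map (fun i => wti (i + 1) * wx)).prod

/-- Right-hand side of the identity `δ_{n,m}`: `x^{m+n} t₁ t₂ ⋯ t_n`. -/
def deltaR (n m : ℕ) : Word := wx ^ (m + n) * ((List.range n).map (fun i => wti (i + 1))).prod

/-- The word `x^{e₀} ∏_{i=1}^r (t_i x^{e_i})`. -/
def wordE (r : ℕ) (e : ℕ → ℕ) : Word :=
  wx ^ (e 0) * ((List.range r).map (fun i => wti (i + 1) * wx ^ (e (i + 1)))).prod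

/-- The word `x^{e₀} y^{f₀} ∏_{i=1}^r (t_i x^{e_i} y^{f_i})`. -/
def wordEF (r : ℕ) (e f : ℕ → ℕ) : Word :=
  wx ^ (e 0) * wy ^ (f 0) *
    ((List.range r).map (fun i => wti (i + 1) * wx ^ (e (i + 1)) * wy ^ (f (i + 1)))).prod

/-- The word `y^{f₀} x^{e₀} ∏_{i=1}^r (t_i x^{e_i} y^{f_i})`. -/
def wordEF' (r : ℕ) (e f : ℕ → ℕ) : Word :=
  wy ^ (f 0) * wx ^ (e 0) *
    ((List.range r).map (fun i => wti (i + 1) * wx ^ (e (i + 1)) * wy ^ (f (i + 1)))).prod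

/-! ## Aperiodicity and central idempotents -/

/-- The subset `S` of `M` is a subsemigroup which is a group under the induced
multiplication. -/
def IsGroupSubsemigroup {M : Type} [Monoid M] (S : Set M) : Prop :=
  (∀ a ∈ S, ∀ b ∈ S, a * b ∈ S) ∧
    ∃ e ∈ S, (∀ a ∈ S, e * a = a ∧ a * e = a) ∧ ∀ a ∈ S, ∃ b ∈ S, a * b = e ∧ b * a = e

/-- `M` is aperiodic: every subsemigroup of `M` which is a group under the induced
multiplication is a singleton. -/
def Aperiodic (M : Type) [Monoid M] : Prop :=
  ∀ S : Set M, IsGroupSubsemigroup S → ∃ a, S = {a}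

/-- `M` has central idempotents. -/
def CentralIdempotents (M : Type) [Monoid M] : Prop :=
  ∀ e : M, e * e = e → ∀ a : M, e * a = a * e



/-! ## Auxiliary machinery for Statement 19 -/

set_option maxRecDepth 100000

namespace S19

/-! ### A finite monoid `KM` belonging to the variety `N`,
separating `xysxzytz` from `yxsxzytz`. -/

inductive KM where
  | e0 | e1 | e2 | e3 | e4 | e5 | e6 | e7 | e8 | e9 | e10 | e11 | e12 | e13 | e14 | e15 | e16 | e17
  deriving DecidableEq

def kmul : KM → KM → KM
  | .e0, .e0 => .e0
  | .e0, .e1 => .e1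
  | .e0, .e2 => .e2
  | .e0, .e3 => .e3
  | .e0, .e4 => .e4
  | .e0, .e5 => .e5
  | .e0, .e6 => .e6
  | .e0, .e7 => .e7
  | .e0, .e8 => .e8
  | .e0, .e9 => .e9
  | .e0, .e10 => .e10
  | .e0, .e11 => .e11
  | .e0, .e12 => .e12
  | .e0, .e13 => .e13
  | .e0, .e14 => .e14
  | .e0, .e15 => .e15
  | .e0, .e16 => .e16
  | .e0, .e17 => .e17
  | .e1, .e0 => .e1
  | .e1, .e1 => .e4
  | .e1, .e2 => .e5
  | .e1, .e3 => .e4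
  | .e1, .e4 => .e4
  | .e1, .e5 => .e4
  | .e1, .e6 => .e4
  | .e1, .e7 => .e10
  | .e1, .e8 => .e4
  | .e1, .e9 => .e4
  | .e1, .e10 => .e4
  | .e1, .e11 => .e14
  | .e1, .e12 => .e15
  | .e1, .e13 => .e4
  | .e1, .e14 => .e4
  | .e1, .e15 => .e4
  | .e1, .e16 => .e17
  | .e1, .e17 => .e4
  | .e2, .e0 => .e2
  | .e2, .e1 => .e6
  | .e2, .e2 => .e4
  | .e2, .e3 => .e7
  | .e2, .e4 => .e4
  | .e2, .e5 => .e4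
  | .e2, .e6 => .e4
  | .e2, .e7 => .e4
  | .e2, .e8 => .e11
  | .e2, .e9 => .e12
  | .e2, .e10 => .e4
  | .e2, .e11 => .e4
  | .e2, .e12 => .e4
  | .e2, .e13 => .e16
  | .e2, .e14 => .e4
  | .e2, .e15 => .e4
  | .e2, .e16 => .e4
  | .e2, .e17 => .e4
  | .e3, .e0 => .e3
  | .e3, .e1 => .e8
  | .e3, .e2 => .e9
  | .e3, .e3 => .e4
  | .e3, .e4 => .e4
  | .e3, .e5 => .e13
  | .e3, .e6 => .e13
  | .e3, .e7 => .e4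
  | .e3, .e8 => .e4
  | .e3, .e9 => .e4
  | .e3, .e10 => .e4
  | .e3, .e11 => .e4
  | .e3, .e12 => .e4
  | .e3, .e13 => .e4
  | .e3, .e14 => .e4
  | .e3, .e15 => .e4
  | .e3, .e16 => .e4
  | .e3, .e17 => .e4
  | .e4, .e0 => .e4
  | .e4, .e1 => .e4
  | .e4, .e2 => .e4
  | .e4, .e3 => .e4
  | .e4, .e4 => .e4
  | .e4, .e5 => .e4
  | .e4, .e6 => .e4
  | .e4, .e7 => .e4
  | .e4, .e8 => .e4
  | .e4, .e9 => .e4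
  | .e4, .e10 => .e4
  | .e4, .e11 => .e4
  | .e4, .e12 => .e4
  | .e4, .e13 => .e4
  | .e4, .e14 => .e4
  | .e4, .e15 => .e4
  | .e4, .e16 => .e4
  | .e4, .e17 => .e4
  | .e5, .e0 => .e5
  | .e5, .e1 => .e4
  | .e5, .e2 => .e4
  | .e5, .e3 => .e10
  | .e5, .e4 => .e4
  | .e5, .e5 => .e4
  | .e5, .e6 => .e4
  | .e5, .e7 => .e4
  | .e5, .e8 => .e14
  | .e5, .e9 => .e15
  | .e5, .e10 => .e4
  | .e5, .e11 => .e4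
  | .e5, .e12 => .e4
  | .e5, .e13 => .e17
  | .e5, .e14 => .e4
  | .e5, .e15 => .e4
  | .e5, .e16 => .e4
  | .e5, .e17 => .e4
  | .e6, .e0 => .e6
  | .e6, .e1 => .e4
  | .e6, .e2 => .e4
  | .e6, .e3 => .e4
  | .e6, .e4 => .e4
  | .e6, .e5 => .e4
  | .e6, .e6 => .e4
  | .e6, .e7 => .e4
  | .e6, .e8 => .e4
  | .e6, .e9 => .e4
  | .e6, .e10 => .e4
  | .e6, .e11 => .e4
  | .e6, .e12 => .e4
  | .e6, .e13 => .e4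
  | .e6, .e14 => .e4
  | .e6, .e15 => .e4
  | .e6, .e16 => .e4
  | .e6, .e17 => .e4
  | .e7, .e0 => .e7
  | .e7, .e1 => .e11
  | .e7, .e2 => .e12
  | .e7, .e3 => .e4
  | .e7, .e4 => .e4
  | .e7, .e5 => .e16
  | .e7, .e6 => .e16
  | .e7, .e7 => .e4
  | .e7, .e8 => .e4
  | .e7, .e9 => .e4
  | .e7, .e10 => .e4
  | .e7, .e11 => .e4
  | .e7, .e12 => .e4
  | .e7, .e13 => .e4
  | .e7, .e14 => .e4
  | .e7, .e15 => .e4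
  | .e7, .e16 => .e4
  | .e7, .e17 => .e4
  | .e8, .e0 => .e8
  | .e8, .e1 => .e4
  | .e8, .e2 => .e13
  | .e8, .e3 => .e4
  | .e8, .e4 => .e4
  | .e8, .e5 => .e4
  | .e8, .e6 => .e4
  | .e8, .e7 => .e4
  | .e8, .e8 => .e4
  | .e8, .e9 => .e4
  | .e8, .e10 => .e4
  | .e8, .e11 => .e4
  | .e8, .e12 => .e4
  | .e8, .e13 => .e4
  | .e8, .e14 => .e4
  | .e8, .e15 => .e4
  | .e8, .e16 => .e4
  | .e8, .e17 => .e4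
  | .e9, .e0 => .e9
  | .e9, .e1 => .e13
  | .e9, .e2 => .e4
  | .e9, .e3 => .e4
  | .e9, .e4 => .e4
  | .e9, .e5 => .e4
  | .e9, .e6 => .e4
  | .e9, .e7 => .e4
  | .e9, .e8 => .e4
  | .e9, .e9 => .e4
  | .e9, .e10 => .e4
  | .e9, .e11 => .e4
  | .e9, .e12 => .e4
  | .e9, .e13 => .e4
  | .e9, .e14 => .e4
  | .e9, .e15 => .e4
  | .e9, .e16 => .e4
  | .e9, .e17 => .e4
  | .e10, .e0 => .e10
  | .e10, .e1 => .e14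
  | .e10, .e2 => .e15
  | .e10, .e3 => .e4
  | .e10, .e4 => .e4
  | .e10, .e5 => .e17
  | .e10, .e6 => .e17
  | .e10, .e7 => .e4
  | .e10, .e8 => .e4
  | .e10, .e9 => .e4
  | .e10, .e10 => .e4
  | .e10, .e11 => .e4
  | .e10, .e12 => .e4
  | .e10, .e13 => .e4
  | .e10, .e14 => .e4
  | .e10, .e15 => .e4
  | .e10, .e16 => .e4
  | .e10, .e17 => .e4
  | .e11, .e0 => .e11
  | .e11, .e1 => .e4
  | .e11, .e2 => .e16
  | .e11, .e3 => .e4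
  | .e11, .e4 => .e4
  | .e11, .e5 => .e4
  | .e11, .e6 => .e4
  | .e11, .e7 => .e4
  | .e11, .e8 => .e4
  | .e11, .e9 => .e4
  | .e11, .e10 => .e4
  | .e11, .e11 => .e4
  | .e11, .e12 => .e4
  | .e11, .e13 => .e4
  | .e11, .e14 => .e4
  | .e11, .e15 => .e4
  | .e11, .e16 => .e4
  | .e11, .e17 => .e4
  | .e12, .e0 => .e12
  | .e12, .e1 => .e16
  | .e12, .e2 => .e4
  | .e12, .e3 => .e4
  | .e12, .e4 => .e4
  | .e12, .e5 => .e4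
  | .e12, .e6 => .e4
  | .e12, .e7 => .e4
  | .e12, .e8 => .e4
  | .e12, .e9 => .e4
  | .e12, .e10 => .e4
  | .e12, .e11 => .e4
  | .e12, .e12 => .e4
  | .e12, .e13 => .e4
  | .e12, .e14 => .e4
  | .e12, .e15 => .e4
  | .e12, .e16 => .e4
  | .e12, .e17 => .e4
  | .e13, .e0 => .e13
  | .e13, .e1 => .e4
  | .e13, .e2 => .e4
  | .e13, .e3 => .e4
  | .e13, .e4 => .e4
  | .e13, .e5 => .e4
  | .e13, .e6 => .e4
  | .e13, .e7 => .e4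
  | .e13, .e8 => .e4
  | .e13, .e9 => .e4
  | .e13, .e10 => .e4
  | .e13, .e11 => .e4
  | .e13, .e12 => .e4
  | .e13, .e13 => .e4
  | .e13, .e14 => .e4
  | .e13, .e15 => .e4
  | .e13, .e16 => .e4
  | .e13, .e17 => .e4
  | .e14, .e0 => .e14
  | .e14, .e1 => .e4
  | .e14, .e2 => .e17
  | .e14, .e3 => .e4
  | .e14, .e4 => .e4
  | .e14, .e5 => .e4
  | .e14, .e6 => .e4
  | .e14, .e7 => .e4
  | .e14, .e8 => .e4
  | .e14, .e9 => .e4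
  | .e14, .e10 => .e4
  | .e14, .e11 => .e4
  | .e14, .e12 => .e4
  | .e14, .e13 => .e4
  | .e14, .e14 => .e4
  | .e14, .e15 => .e4
  | .e14, .e16 => .e4
  | .e14, .e17 => .e4
  | .e15, .e0 => .e15
  | .e15, .e1 => .e17
  | .e15, .e2 => .e4
  | .e15, .e3 => .e4
  | .e15, .e4 => .e4
  | .e15, .e5 => .e4
  | .e15, .e6 => .e4
  | .e15, .e7 => .e4
  | .e15, .e8 => .e4
  | .e15, .e9 => .e4
  | .e15, .e10 => .e4
  | .e15, .e11 => .e4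
  | .e15, .e12 => .e4
  | .e15, .e13 => .e4
  | .e15, .e14 => .e4
  | .e15, .e15 => .e4
  | .e15, .e16 => .e4
  | .e15, .e17 => .e4
  | .e16, .e0 => .e16
  | .e16, .e1 => .e4
  | .e16, .e2 => .e4
  | .e16, .e3 => .e4
  | .e16, .e4 => .e4
  | .e16, .e5 => .e4
  | .e16, .e6 => .e4
  | .e16, .e7 => .e4
  | .e16, .e8 => .e4
  | .e16, .e9 => .e4
  | .e16, .e10 => .e4
  | .e16, .e11 => .e4
  | .e16, .e12 => .e4
  | .e16, .e13 => .e4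
  | .e16, .e14 => .e4
  | .e16, .e15 => .e4
  | .e16, .e16 => .e4
  | .e16, .e17 => .e4
  | .e17, .e0 => .e17
  | .e17, .e1 => .e4
  | .e17, .e2 => .e4
  | .e17, .e3 => .e4
  | .e17, .e4 => .e4
  | .e17, .e5 => .e4
  | .e17, .e6 => .e4
  | .e17, .e7 => .e4
  | .e17, .e8 => .e4
  | .e17, .e9 => .e4
  | .e17, .e10 => .e4
  | .e17, .e11 => .e4
  | .e17, .e12 => .e4
  | .e17, .e13 => .e4
  | .e17, .e14 => .e4
  | .e17, .e15 => .e4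
  | .e17, .e16 => .e4
  | .e17, .e17 => .e4

namespace KM

def allK : List KM := [e0,e1,e2,e3,e4,e5,e6,e7,e8,e9,e10,e11,e12,e13,e14,e15,e16,e17]

theorem allK_mem : ∀ a : KM, a ∈ allK := by intro a; cases a <;> simp [allK]

set_option maxHeartbeats 4000000 in
theorem kmul_assoc : ∀ a ∈ allK, ∀ b ∈ allK, ∀ c ∈ allK,
    kmul (kmul a b) c = kmul a (kmul b c) := by decide

instance : Monoid KM where
  mul := kmul
  one := e0
  one_mul a := by cases a <;> rfl
  mul_one a := by cases a <;> rfl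
  mul_assoc a b c := kmul_assoc a (allK_mem a) b (allK_mem b) c (allK_mem c)

theorem e0_eq_one : (e0 : KM) = 1 := rfl

theorem zeroK_mul : ∀ a : KM, e4 * a = e4 := by intro a; cases a <;> rfl
theorem mul_zeroK : ∀ a : KM, a * e4 = e4 := by intro a; cases a <;> rfl

theorem sqK : ∀ a ∈ allK, a ≠ e0 → a * a = e4 := by decide

/-- Weight of an element (length of a shortest representing word; `6` for zero). -/
def wt : KM → ℕ
  | e0 => 0 | e1 => 1 | e2 => 1 | e3 => 1 | e4 => 6
  | e5 => 2 | e6 => 2 | e7 => 2 | e8 => 2 | e9 => 2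
  | e10 => 3 | e11 => 3 | e12 => 3 | e13 => 3
  | e14 => 4 | e15 => 4 | e16 => 4 | e17 => 5

set_option maxHeartbeats 1000000 in
theorem wt_mulK : ∀ a ∈ allK, ∀ b ∈ allK, a * b ≠ e4 → wt (a * b) = wt a + wt b := by decide

theorem wt_leK : ∀ a ∈ allK, a ≠ e4 → wt a ≤ 5 := by decide
theorem wt_posK : ∀ a ∈ allK, a ≠ e0 → 1 ≤ wt a := by decide

def g4 : List KM := [e0, e1, e2, e3]
def g9 : List KM := [e0, e1, e2, e3, e5, e6, e7, e8, e9]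

theorem wt1K : ∀ a ∈ allK, wt a ≤ 1 → a ∈ g4 := by decide
theorem wt2K : ∀ a ∈ allK, wt a ≤ 2 → a ∈ g9 := by decide

set_option maxHeartbeats 1000000 in
theorem gamma_small : ∀ a ∈ g4, ∀ b ∈ g9, ∀ c ∈ g9,
    a * b * a * c * a = a * a * b * c := by decide

set_option maxHeartbeats 1000000 in
theorem alpha_small : ∀ a ∈ g4, ∀ c ∈ g4, ∀ b ∈ g4, ∀ d ∈ g4,
    a * c * b * d * a * b = a * c * b * d * b * a := by decide

set_option maxHeartbeats 1000000 in
theorem beta_small : ∀ a ∈ g4, ∀ c ∈ g4, ∀ b ∈ g4, ∀ d ∈ g4,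
    a * c * a * b * d * b = a * c * b * a * d * b := by decide

theorem idK1 : ∀ a : KM, a ^ 2 = a ^ 3 := by
  intro a
  by_cases h : a = e0
  · subst h; rw [e0_eq_one, one_pow, one_pow]
  · rw [pow_two, pow_succ, pow_two, sqK a (allK_mem a) h, zeroK_mul]

theorem idK2 : ∀ a b : KM, a ^ 2 * b = b * a ^ 2 := by
  intro a b
  by_cases h : a = e0
  · subst h; rw [e0_eq_one, one_pow, one_mul, mul_one]
  · rw [pow_two, sqK a (allK_mem a) h, zeroK_mul, mul_zeroK]

theorem wt_chain5 : ∀ p1 p2 p3 p4 p5 : KM, p1 * p2 * p3 * p4 * p5 ≠ e4 →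
    wt p1 + wt p2 + wt p3 + wt p4 + wt p5 ≤ 5 := by
  intro p1 p2 p3 p4 p5 hL
  have h1 : p1 * p2 ≠ e4 := fun hh => hL (by rw [hh, zeroK_mul, zeroK_mul, zeroK_mul])
  have h2 : p1 * p2 * p3 ≠ e4 := fun hh => hL (by rw [hh, zeroK_mul, zeroK_mul])
  have h3 : p1 * p2 * p3 * p4 ≠ e4 := fun hh => hL (by rw [hh, zeroK_mul])
  have w1 := wt_mulK p1 (allK_mem _) p2 (allK_mem _) h1
  have w2 := wt_mulK (p1*p2) (allK_mem _) p3 (allK_mem _) h2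
  have w3 := wt_mulK (p1*p2*p3) (allK_mem _) p4 (allK_mem _) h3
  have w4 := wt_mulK (p1*p2*p3*p4) (allK_mem _) p5 (allK_mem _) hL
  have w5 := wt_leK _ (allK_mem _) hL
  omega

theorem wt_chain6 : ∀ p1 p2 p3 p4 p5 p6 : KM, p1 * p2 * p3 * p4 * p5 * p6 ≠ e4 →
    wt p1 + wt p2 + wt p3 + wt p4 + wt p5 + wt p6 ≤ 5 := by
  intro p1 p2 p3 p4 p5 p6 hL
  have h1 : p1 * p2 ≠ e4 := fun hh => hL (by rw [hh, zeroK_mul, zeroK_mul, zeroK_mul, zeroK_mul])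
  have h2 : p1 * p2 * p3 ≠ e4 := fun hh => hL (by rw [hh, zeroK_mul, zeroK_mul, zeroK_mul])
  have h3 : p1 * p2 * p3 * p4 ≠ e4 := fun hh => hL (by rw [hh, zeroK_mul, zeroK_mul])
  have h4 : p1 * p2 * p3 * p4 * p5 ≠ e4 := fun hh => hL (by rw [hh, zeroK_mul])
  have w1 := wt_mulK p1 (allK_mem _) p2 (allK_mem _) h1
  have w2 := wt_mulK (p1*p2) (allK_mem _) p3 (allK_mem _) h2
  have w3 := wt_mulK (p1*p2*p3) (allK_mem _) p4 (allK_mem _) h3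
  have w4 := wt_mulK (p1*p2*p3*p4) (allK_mem _) p5 (allK_mem _) h4
  have w5 := wt_mulK (p1*p2*p3*p4*p5) (allK_mem _) p6 (allK_mem _) hL
  have w6 := wt_leK _ (allK_mem _) hL
  omega

theorem idK3 : ∀ a b c : KM, a * b * a * c * a = a ^ 2 * b * c := by
  intro a b c
  by_cases h : a = e0
  · subst h; rw [e0_eq_one, one_pow, one_mul, mul_one, mul_one]
  · rw [pow_two, sqK a (allK_mem a) h, zeroK_mul, zeroK_mul]
    by_cases hL : a * b * a * c * a = e4
    · exact hL
    · have hw := wt_chain5 a b a c a hL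
      have wa := wt_posK a (allK_mem a) h
      have := gamma_small a (wt1K a (allK_mem a) (by omega)) b (wt2K b (allK_mem b) (by omega))
        c (wt2K c (allK_mem c) (by omega))
      rw [this, sqK a (allK_mem a) h, zeroK_mul, zeroK_mul] at hL
      exact absurd rfl hL

theorem idK4 : ∀ a c b d : KM, a * c * b * d * a * b = a * c * b * d * b * a := by
  intro a c b d
  by_cases hx : a = e0
  · subst hx; rw [e0_eq_one]; simp [mul_assoc]
  by_cases hy : b = e0
  · subst hy; rw [e0_eq_one]; simp [mul_assoc]
  have wa := wt_posK a (allK_mem a) hx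
  have wb := wt_posK b (allK_mem b) hy
  have small : wt a + wt c + wt b + wt d + wt a + wt b ≤ 5 ∨
      (a * c * b * d * a * b = e4 ∧ a * c * b * d * b * a = e4) := by
    by_cases hL : a * c * b * d * a * b = e4
    · by_cases hR : a * c * b * d * b * a = e4
      · exact Or.inr ⟨hL, hR⟩
      · have := wt_chain6 a c b d b a hR; exact Or.inl (by omega)
    · exact Or.inl (wt_chain6 a c b d a b hL)
  rcases small with hw | ⟨hL, hR⟩
  · exact alpha_small a (wt1K a (allK_mem a) (by omega)) c (wt1K c (allK_mem c) (by omega))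
      b (wt1K b (allK_mem b) (by omega)) d (wt1K d (allK_mem d) (by omega))
  · rw [hL, hR]

theorem idK5 : ∀ a c b d : KM, a * c * a * b * d * b = a * c * b * a * d * b := by
  intro a c b d
  by_cases hx : a = e0
  · subst hx; rw [e0_eq_one]; simp [mul_assoc]
  by_cases hy : b = e0
  · subst hy; rw [e0_eq_one]; simp [mul_assoc]
  have wa := wt_posK a (allK_mem a) hx
  have wb := wt_posK b (allK_mem b) hy
  have small : wt a + wt c + wt a + wt b + wt d + wt b ≤ 5 ∨
      (a * c * a * b * d * b = e4 ∧ a * c * b * a * d * b = e4) := by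
    by_cases hL : a * c * a * b * d * b = e4
    · by_cases hR : a * c * b * a * d * b = e4
      · exact Or.inr ⟨hL, hR⟩
      · have := wt_chain6 a c b a d b hR; exact Or.inl (by omega)
    · exact Or.inl (wt_chain6 a c a b d b hL)
  rcases small with hw | ⟨hL, hR⟩
  · exact beta_small a (wt1K a (allK_mem a) (by omega)) c (wt1K c (allK_mem c) (by omega))
      b (wt1K b (allK_mem b) (by omega)) d (wt1K d (allK_mem d) (by omega))
  · rw [hL, hR]

end KM

/-- The set of identities valid in `KM`. -/
def ThK : Word → Word → Prop := fun u v => ∀ f : Word →* KM, f u = f v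

theorem isFIC_ThK : IsFIC ThK := by
  refine ⟨fun u f => rfl, fun {u v} h f => (h f).symm,
    fun {u v w} h1 h2 f => (h1 f).trans (h2 f),
    fun {a b c d} h1 h2 f => ?_, fun σ {u v} h f => h (f.comp σ)⟩
  rw [map_mul, map_mul, h1 f, h2 f]

theorem relle_ThK : RelLe SigmaN ThK := by
  rintro u v (⟨rfl, rfl⟩ | ⟨rfl, rfl⟩ | ⟨rfl, rfl⟩ | ⟨rfl, rfl⟩ | ⟨rfl, rfl⟩) f
  · simp only [map_pow]; exact KM.idK1 _
  · simp only [map_mul, map_pow]; exact KM.idK2 _ _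
  · simp only [map_mul, map_pow]; exact KM.idK3 _ _ _
  · simp only [idAlphaL, idAlphaR, map_mul]; exact KM.idK4 _ _ _ _
  · simp only [idBetaL, idBetaR, map_mul]; exact KM.idK5 _ _ _ _

/-! ### Computations in the factor monoid `M(xzxyty)` -/

abbrev Wl : List ℕ := [0, 2, 0, 1, 3, 1]
abbrev FW : Type := Factor Wl

/-- A factor of `w = xzxyty` as an element of `M(w)` (zero if not a factor). -/
def fc (l : List ℕ) : FW := if h : l <:+: Wl then some ⟨l, h⟩ else none

theorem prod_none : ∀ {l : List FW}, (none : FW) ∈ l → l.prod = none := by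
  intro l h
  induction l with
  | nil => cases h
  | cons a t ih =>
    rw [List.prod_cons]
    rcases List.mem_cons.mp h with h | h
    · rw [← h, Factor.none_mul]
    · rw [ih h, Factor.mul_none]

theorem pow_none {E : FW} (h : E * E = none) (k : ℕ) : E ^ (k + 2) = none := by
  have h2 : E ^ (k + 2) = E ^ k * (E * E) := by rw [pow_succ, pow_succ, mul_assoc]
  rw [h2, h, Factor.mul_none]

theorem Epow {E : FW} (h : E * E = none) (k : ℕ) :
    E ^ k = if k = 0 then 1 else if k = 1 then E else none := by
  match k with
  | 0 => simp
  | 1 => simp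
  | (k+2) => rw [pow_none h k, if_neg (by omega), if_neg (by omega)]

theorem prod_ind (c : ℕ) (E : FW) : ∀ (l : List ℕ) (g : ℕ → FW),
    (∀ a ∈ l, g a = if a = c then E else 1) → (l.map g).prod = E ^ l.count c := by
  intro l
  induction l with
  | nil => intro g _; simp
  | cons a t ih =>
    intro g hg
    rw [List.map_cons, List.prod_cons, hg a (List.mem_cons_self : a ∈ a :: t),
      ih g (fun x hx => hg x (List.mem_cons_of_mem a hx))]
    by_cases hac : a = c
    · subst hac; rw [if_pos rfl, List.count_cons_self]
      exact (pow_succ' E _).symm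
    · rw [if_neg hac, one_mul, List.count_cons_of_ne hac]

theorem ind2 {c d : ℕ} {E D : FW} (a : ℕ) (h : a ≠ d) :
    (if a = c then E else if a = d then D else 1) = if a = c then E else 1 := by
  by_cases hc : a = c <;> simp [hc, h]

theorem ind3 {c d e : ℕ} {E D F : FW} (a : ℕ) (h : a ≠ d) (h' : a ≠ e) :
    (if a = c then E else if a = d then D else if a = e then F else 1) =
      if a = c then E else 1 := by
  by_cases hc : a = c <;> simp [hc, h, h']

theorem ne_of_notmem {d : ℕ} {l : List ℕ} (hd : d ∉ l) : ∀ a ∈ l, a ≠ d := by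
  intro a ha hx
  subst hx
  exact hd ha

theorem ytyEq {A B : ℕ} (h : (fc [1,3,1] : FW) = fc [1] ^ A * (fc [3] * fc [1] ^ B)) :
    A = 1 ∧ B = 1 := by
  rw [Epow (by decide) A, Epow (by decide) B] at h
  split_ifs at h <;>
    first
      | exact ⟨by omega, by omega⟩
      | exact absurd h (by decide)

theorem xyEq {A B : ℕ} (h : (fc [0,1] : FW) = fc [1] ^ A * (fc [0] * fc [1] ^ B)) :
    A = 0 ∧ B = 1 := by
  rw [Epow (by decide) A, Epow (by decide) B] at h
  split_ifs at h <;>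
    first
      | exact ⟨by omega, by omega⟩
      | exact absurd h (by decide)

theorem noneYty {A B : ℕ} (h : (none : FW) = fc [1] ^ A * (fc [3] * fc [1] ^ B)) :
    2 ≤ A ∨ 2 ≤ B := by
  rw [Epow (by decide) A, Epow (by decide) B] at h
  split_ifs at h <;>
    first
      | (left; omega)
      | (right; omega)
      | exact absurd h (by decide)

/-! ### Elementary list lemmas -/

theorem all_two : ∀ l : List ℕ, (∀ a ∈ l, a = 2) → l.count 2 = 1 → l = [2] := by
  intro l h hc
  match l with
  | [] => simp at hc
  | a :: t =>
    have ha := h a (List.mem_cons_self : a ∈ a :: t)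
    subst ha
    rw [List.count_cons_self] at hc
    have ht : t.count 2 = 0 := by omega
    match t with
    | [] => rfl
    | b :: t' =>
      have hb := h b (List.mem_cons_of_mem _ (List.mem_cons_self : b ∈ b :: t'))
      subst hb
      rw [List.count_cons_self] at ht
      omega

theorem len01 : ∀ l : List ℕ, (∀ a ∈ l, a = 0 ∨ a = 1) →
    l.length = l.count 0 + l.count 1 := by
  intro l h
  induction l with
  | nil => simp
  | cons a t ih =>
    have ht := ih (fun x hx => h x (List.mem_cons_of_mem a hx))
    rcases h a (List.mem_cons_self : a ∈ a :: t) with rfl | rfl <;>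
      simp [List.count_cons, ht] <;> omega

theorem perm01 : ∀ l : List ℕ, (∀ a ∈ l, a = 0 ∨ a = 1) → l.count 0 = 1 → l.count 1 = 1 →
    l = [0, 1] ∨ l = [1, 0] := by
  intro l h h0 h1
  have hlen : l.length = 2 := by rw [len01 l h]; omega
  match l, hlen with
  | [a, b], _ =>
    rcases h a (by simp) with rfl | rfl <;> rcases h b (by simp) with rfl | rfl <;>
      revert h0 h1 <;> decide

theorem len012 : ∀ l : List ℕ, (∀ a ∈ l, a = 0 ∨ a = 1 ∨ a = 2) →
    l.length = l.count 0 + l.count 1 + l.count 2 := by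
  intro l h
  induction l with
  | nil => simp
  | cons a t ih =>
    have ht := ih (fun x hx => h x (List.mem_cons_of_mem a hx))
    rcases h a (List.mem_cons_self : a ∈ a :: t) with rfl | rfl | rfl <;>
      simp [List.count_cons, ht] <;> omega

theorem perm012 : ∀ l : List ℕ, (∀ a ∈ l, a = 0 ∨ a = 1 ∨ a = 2) →
    l.count 0 = 1 → l.count 1 = 1 → l.count 2 = 1 →
    l = [0,1,2] ∨ l = [0,2,1] ∨ l = [1,0,2] ∨ l = [1,2,0] ∨ l = [2,0,1] ∨ l = [2,1,0] := by
  intro l h h0 h1 h2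
  have hlen : l.length = 3 := by rw [len012 l h]; omega
  match l, hlen with
  | [a, b, c], _ =>
    rcases h a (by simp) with rfl | rfl | rfl <;>
      rcases h b (by simp) with rfl | rfl | rfl <;>
        rcases h c (by simp) with rfl | rfl | rfl <;>
          revert h0 h1 h2 <;> decide

/-! ### The three killing tests -/

def gT1 : ℕ → FW := fun a =>
  if a = 1 then fc [0] else if a = 4 then fc [2] else if a = 2 then fc [1] else
    if a = 3 then fc [3] else 1

def gT2 : ℕ → FW := fun a =>
  if a = 0 then fc [0] else if a = 4 then fc [2] else if a = 2 then fc [1] else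
    if a = 3 then fc [3] else 1

def gTK : ℕ → KM := fun a =>
  if a = 0 then KM.e1 else if a = 1 then KM.e2 else if a = 4 then KM.e3 else 1

end S19

/-- The word `xysxzytz` is an isoterm for the join of the variety
generated by the factor monoid `M(xzxyty)` and the variety `N`: any word `v` such that
the identity `xysxzytz ≈ v` holds both in `M(xzxyty)` and throughout `N` equals
`xysxzytz`. -/
theorem statement_19 (v : Word)
    (h : RelMeet (ThFM [0, 2, 0, 1, 3, 1]) thetaN
      (wx * wy * ws * wx * wz * wy * wt * wz) v) :
    v = wx * wy * ws * wx * wz * wy * wt * wz := by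

  obtain ⟨h1, h2⟩ := h
  have hKsat : ∀ f : Word →* S19.KM,
      f (wx * wy * ws * wx * wz * wy * wt * wz) = f v :=
    h2 S19.ThK S19.isFIC_ThK S19.relle_ThK
  have hUl : FreeMonoid.toList (wx * wy * ws * wx * wz * wy * wt * wz)
      = [0, 1, 4, 0, 2, 1, 3, 2] := rfl
  set L : List ℕ := FreeMonoid.toList v with hLdef
  have hFW : ∀ g : ℕ → S19.FW,
      (([0, 1, 4, 0, 2, 1, 3, 2] : List ℕ).map g).prod = (L.map g).prod := by
    intro g
    have hh := h1 (FreeMonoid.lift g)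
    rwa [FreeMonoid.lift_apply, FreeMonoid.lift_apply, hUl] at hh
  have hKM : ∀ g : ℕ → S19.KM,
      (([0, 1, 4, 0, 2, 1, 3, 2] : List ℕ).map g).prod = (L.map g).prod := by
    intro g
    have hh := hKsat (FreeMonoid.lift g)
    rwa [FreeMonoid.lift_apply, FreeMonoid.lift_apply, hUl] at hh
  -- every letter of v is among 0,1,2,3,4
  have hA : ∀ a ∈ L, a < 5 := by
    intro a ha
    by_contra h5
    have hh := hFW (fun b => if b < 5 then (1 : S19.FW) else none)
    have hnone : (none : S19.FW) ∈ L.map (fun b => if b < 5 then (1 : S19.FW) else none) :=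
      List.mem_map.mpr ⟨a, ha, by simp [h5]⟩
    rw [S19.prod_none hnone] at hh
    exact absurd hh (by decide)
  -- the letters s = 4 and t = 3 occur exactly once in v
  have hc4 : L.count 4 = 1 := by
    have hh := hFW (fun b => if b = 4 then S19.fc [3] else 1)
    rw [S19.prod_ind 4 (S19.fc [3]) L _ (fun a _ => rfl),
      show (([0,1,4,0,2,1,3,2] : List ℕ).map (fun b => if b = 4 then S19.fc [3] else 1)).prod
        = S19.fc [3] from by decide, S19.Epow (by decide)] at hh
    split_ifs at hh with hh1 hh2
    · exact absurd hh (by decide)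
    · exact hh2
    · exact absurd hh (by decide)
  have hc3 : L.count 3 = 1 := by
    have hh := hFW (fun b => if b = 3 then S19.fc [3] else 1)
    rw [S19.prod_ind 3 (S19.fc [3]) L _ (fun a _ => rfl),
      show (([0,1,4,0,2,1,3,2] : List ℕ).map (fun b => if b = 3 then S19.fc [3] else 1)).prod
        = S19.fc [3] from by decide, S19.Epow (by decide)] at hh
    split_ifs at hh with hh1 hh2
    · exact absurd hh (by decide)
    · exact hh2
    · exact absurd hh (by decide)
  -- split v at the unique occurrence of s = 4
  obtain ⟨p, q, hpq⟩ := List.append_of_mem (List.count_pos_iff.mp (by omega : 0 < L.count 4))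
  have hcpq4 : p.count 4 = 0 ∧ q.count 4 = 0 := by
    rw [hpq] at hc4
    simp [List.count_append, List.count_cons] at hc4
    omega
  have h4np : (4 : ℕ) ∉ p := List.count_eq_zero.mp hcpq4.1
  have h4nq : (4 : ℕ) ∉ q := List.count_eq_zero.mp hcpq4.2
  -- the letter t = 3 lies after s = 4
  have hc3pq : p.count 3 = 0 ∧ q.count 3 = 1 := by
    have hh := hFW (fun b => if b = 3 then S19.fc [1] else if b = 4 then S19.fc [0] else 1)
    rw [show (([0,1,4,0,2,1,3,2] : List ℕ).map
          (fun b => if b = 3 then S19.fc [1] else if b = 4 then S19.fc [0] else 1)).prod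
        = S19.fc [0,1] from by decide] at hh
    rw [hpq, List.map_append, List.prod_append, List.map_cons, List.prod_cons,
      S19.prod_ind 3 (S19.fc [1]) p _
        (fun a ha => S19.ind2 a (S19.ne_of_notmem h4np a ha)),
      S19.prod_ind 3 (S19.fc [1]) q _
        (fun a ha => S19.ind2 a (S19.ne_of_notmem h4nq a ha)),
      show (if (4:ℕ) = 3 then S19.fc [1] else if (4:ℕ) = 4 then S19.fc [0] else 1)
        = S19.fc [0] from rfl] at hh
    exact S19.xyEq hh
  have h3np : (3 : ℕ) ∉ p := List.count_eq_zero.mp hc3pq.1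
  -- split q at the unique occurrence of t = 3
  obtain ⟨m, q2, hq⟩ :=
    List.append_of_mem (List.count_pos_iff.mp (by omega : 0 < q.count 3))
  have hcm3 : m.count 3 = 0 ∧ q2.count 3 = 0 := by
    have := hc3pq.2
    rw [hq] at this
    simp [List.count_append, List.count_cons] at this
    omega
  have hcm4 : m.count 4 = 0 ∧ q2.count 4 = 0 := by
    have := hcpq4.2
    rw [hq] at this
    simp [List.count_append, List.count_cons] at this
    omega
  have h3nm : (3 : ℕ) ∉ m := List.count_eq_zero.mp hcm3.1
  have h3nq2 : (3 : ℕ) ∉ q2 := List.count_eq_zero.mp hcm3.2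
  have h4nm : (4 : ℕ) ∉ m := List.count_eq_zero.mp hcm4.1
  have h4nq2 : (4 : ℕ) ∉ q2 := List.count_eq_zero.mp hcm4.2
  have hL2 : L = p ++ 4 :: (m ++ 3 :: q2) := by rw [hpq, hq]
  have hL3 : L = (p ++ 4 :: m) ++ 3 :: q2 := by rw [hL2]; simp
  have h3npm : (3 : ℕ) ∉ p ++ 4 :: m := by
    intro hx
    rcases List.mem_append.mp hx with hx | hx
    · exact h3np hx
    · rcases List.mem_cons.mp hx with hx | hx
      · exact absurd hx.symm (by decide)
      · exact h3nm hx
  -- occurrences of x = 0 and y = 1 around s = 4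
  have hc0pq : p.count 0 = 1 ∧ q.count 0 = 1 := by
    have hh := hFW (fun b => if b = 0 then S19.fc [1] else if b = 4 then S19.fc [3] else 1)
    rw [show (([0,1,4,0,2,1,3,2] : List ℕ).map
          (fun b => if b = 0 then S19.fc [1] else if b = 4 then S19.fc [3] else 1)).prod
        = S19.fc [1,3,1] from by decide] at hh
    rw [hpq, List.map_append, List.prod_append, List.map_cons, List.prod_cons,
      S19.prod_ind 0 (S19.fc [1]) p _
        (fun a ha => S19.ind2 a (S19.ne_of_notmem h4np a ha)),
      S19.prod_ind 0 (S19.fc [1]) q _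
        (fun a ha => S19.ind2 a (S19.ne_of_notmem h4nq a ha)),
      show (if (4:ℕ) = 0 then S19.fc [1] else if (4:ℕ) = 4 then S19.fc [3] else 1)
        = S19.fc [3] from rfl] at hh
    exact S19.ytyEq hh
  have hc1pq : p.count 1 = 1 ∧ q.count 1 = 1 := by
    have hh := hFW (fun b => if b = 1 then S19.fc [1] else if b = 4 then S19.fc [3] else 1)
    rw [show (([0,1,4,0,2,1,3,2] : List ℕ).map
          (fun b => if b = 1 then S19.fc [1] else if b = 4 then S19.fc [3] else 1)).prod
        = S19.fc [1,3,1] from by decide] at hh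
    rw [hpq, List.map_append, List.prod_append, List.map_cons, List.prod_cons,
      S19.prod_ind 1 (S19.fc [1]) p _
        (fun a ha => S19.ind2 a (S19.ne_of_notmem h4np a ha)),
      S19.prod_ind 1 (S19.fc [1]) q _
        (fun a ha => S19.ind2 a (S19.ne_of_notmem h4nq a ha)),
      show (if (4:ℕ) = 1 then S19.fc [1] else if (4:ℕ) = 4 then S19.fc [3] else 1)
        = S19.fc [3] from rfl] at hh
    exact S19.ytyEq hh
  -- occurrences of z = 2 around t = 3
  have hc2 : (p ++ 4 :: m).count 2 = 1 ∧ q2.count 2 = 1 := by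
    have hh := hFW (fun b => if b = 2 then S19.fc [1] else if b = 3 then S19.fc [3] else 1)
    rw [show (([0,1,4,0,2,1,3,2] : List ℕ).map
          (fun b => if b = 2 then S19.fc [1] else if b = 3 then S19.fc [3] else 1)).prod
        = S19.fc [1,3,1] from by decide] at hh
    rw [hL3, List.map_append, List.prod_append, List.map_cons, List.prod_cons,
      S19.prod_ind 2 (S19.fc [1]) (p ++ 4 :: m) _
        (fun a ha => S19.ind2 a (S19.ne_of_notmem h3npm a ha)),
      S19.prod_ind 2 (S19.fc [1]) q2 _
        (fun a ha => S19.ind2 a (S19.ne_of_notmem h3nq2 a ha)),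
      show (if (3:ℕ) = 2 then S19.fc [1] else if (3:ℕ) = 3 then S19.fc [3] else 1)
        = S19.fc [3] from rfl] at hh
    exact S19.ytyEq hh
  have hpm2 : (p ++ 4 :: m).count 2 = p.count 2 + m.count 2 := by
    simp [List.count_append, List.count_cons]
  -- x = 0 and y = 1 occur before t = 3 (in the middle block m)
  have hc0m : m.count 0 = 1 ∧ q2.count 0 = 0 := by
    have hh := hFW (fun b => if b = 0 then S19.fc [1] else if b = 3 then S19.fc [3] else 1)
    rw [show (([0,1,4,0,2,1,3,2] : List ℕ).map
          (fun b => if b = 0 then S19.fc [1] else if b = 3 then S19.fc [3] else 1)).prod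
        = (none : S19.FW) from by decide] at hh
    rw [hL3, List.map_append, List.prod_append, List.map_cons, List.prod_cons,
      S19.prod_ind 0 (S19.fc [1]) (p ++ 4 :: m) _
        (fun a ha => S19.ind2 a (S19.ne_of_notmem h3npm a ha)),
      S19.prod_ind 0 (S19.fc [1]) q2 _
        (fun a ha => S19.ind2 a (S19.ne_of_notmem h3nq2 a ha)),
      show (if (3:ℕ) = 0 then S19.fc [1] else if (3:ℕ) = 3 then S19.fc [3] else 1)
        = S19.fc [3] from rfl] at hh
    have hor := S19.noneYty hh
    have hsp : (p ++ 4 :: m).count 0 = p.count 0 + m.count 0 := by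
      simp [List.count_append, List.count_cons]
    have hsq : q.count 0 = m.count 0 + q2.count 0 := by
      rw [hq]; simp [List.count_append, List.count_cons]
    have := hc0pq.1
    have := hc0pq.2
    omega
  have hc1m : m.count 1 = 1 ∧ q2.count 1 = 0 := by
    have hh := hFW (fun b => if b = 1 then S19.fc [1] else if b = 3 then S19.fc [3] else 1)
    rw [show (([0,1,4,0,2,1,3,2] : List ℕ).map
          (fun b => if b = 1 then S19.fc [1] else if b = 3 then S19.fc [3] else 1)).prod
        = (none : S19.FW) from by decide] at hh
    rw [hL3, List.map_append, List.prod_append, List.map_cons, List.prod_cons,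
      S19.prod_ind 1 (S19.fc [1]) (p ++ 4 :: m) _
        (fun a ha => S19.ind2 a (S19.ne_of_notmem h3npm a ha)),
      S19.prod_ind 1 (S19.fc [1]) q2 _
        (fun a ha => S19.ind2 a (S19.ne_of_notmem h3nq2 a ha)),
      show (if (3:ℕ) = 1 then S19.fc [1] else if (3:ℕ) = 3 then S19.fc [3] else 1)
        = S19.fc [3] from rfl] at hh
    have hor := S19.noneYty hh
    have hsp : (p ++ 4 :: m).count 1 = p.count 1 + m.count 1 := by
      simp [List.count_append, List.count_cons]
    have hsq : q.count 1 = m.count 1 + q2.count 1 := by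
      rw [hq]; simp [List.count_append, List.count_cons]
    have := hc1pq.1
    have := hc1pq.2
    omega
  -- z = 2 occurs after s = 4: count 2 p = 0
  have hc2pm : p.count 2 = 0 ∧ m.count 2 = 1 := by
    have hh := hFW (fun b => if b = 2 then S19.fc [1] else if b = 4 then S19.fc [0] else
      if b = 3 then S19.fc [3] else 1)
    rw [show (([0,1,4,0,2,1,3,2] : List ℕ).map
          (fun b => if b = 2 then S19.fc [1] else if b = 4 then S19.fc [0] else
            if b = 3 then S19.fc [3] else 1)).prod
        = S19.fc [0,1,3,1] from by decide] at hh
    rw [hL2, List.map_append, List.prod_append, List.map_cons, List.prod_cons,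
      List.map_append, List.prod_append, List.map_cons, List.prod_cons,
      S19.prod_ind 2 (S19.fc [1]) p _
        (fun a ha => S19.ind3 a (S19.ne_of_notmem h4np a ha) (S19.ne_of_notmem h3np a ha)),
      S19.prod_ind 2 (S19.fc [1]) m _
        (fun a ha => S19.ind3 a (S19.ne_of_notmem h4nm a ha) (S19.ne_of_notmem h3nm a ha)),
      S19.prod_ind 2 (S19.fc [1]) q2 _
        (fun a ha => S19.ind3 a (S19.ne_of_notmem h4nq2 a ha) (S19.ne_of_notmem h3nq2 a ha)),
      show (if (4:ℕ) = 2 then S19.fc [1] else if (4:ℕ) = 4 then S19.fc [0] else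
        if (4:ℕ) = 3 then S19.fc [3] else 1) = S19.fc [0] from rfl,
      show (if (3:ℕ) = 2 then S19.fc [1] else if (3:ℕ) = 4 then S19.fc [0] else
        if (3:ℕ) = 3 then S19.fc [3] else 1) = S19.fc [3] from rfl, hc2.2] at hh
    have hcase : p.count 2 = 0 ∧ m.count 2 = 1 ∨ p.count 2 = 1 ∧ m.count 2 = 0 := by
      have := hc2.1
      omega
    rcases hcase with hgood | ⟨hp2, hm2⟩
    · exact hgood
    · rw [hp2, hm2] at hh
      exact absurd hh (by decide)
  have h2np : (2 : ℕ) ∉ p := List.count_eq_zero.mp hc2pm.1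
  -- q2 = [2]
  have hq2 : q2 = [2] := by
    apply S19.all_two q2 _ hc2.2
    intro a ha
    have haL : a ∈ L := by
      rw [hL2]
      exact List.mem_append.mpr (Or.inr (List.mem_cons_of_mem _
        (List.mem_append.mpr (Or.inr (List.mem_cons_of_mem _ ha)))))
    have h5 := hA a haL
    have h0' : a ≠ 0 := S19.ne_of_notmem (List.count_eq_zero.mp hc0m.2) a ha
    have h1' : a ≠ 1 := S19.ne_of_notmem (List.count_eq_zero.mp hc1m.2) a ha
    have h3' : a ≠ 3 := S19.ne_of_notmem h3nq2 a ha
    have h4' : a ≠ 4 := S19.ne_of_notmem h4nq2 a ha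
    omega
  -- p is a permutation of {0, 1}
  have hps : p = [0, 1] ∨ p = [1, 0] := by
    apply S19.perm01 p _ hc0pq.1 hc1pq.1
    intro a ha
    have haL : a ∈ L := by
      rw [hL2]; exact List.mem_append.mpr (Or.inl ha)
    have h5 := hA a haL
    have h2' : a ≠ 2 := S19.ne_of_notmem h2np a ha
    have h3' : a ≠ 3 := S19.ne_of_notmem h3np a ha
    have h4' : a ≠ 4 := S19.ne_of_notmem h4np a ha
    omega
  -- m is a permutation of {0, 1, 2}
  have hms : m = [0,1,2] ∨ m = [0,2,1] ∨ m = [1,0,2] ∨ m = [1,2,0] ∨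
      m = [2,0,1] ∨ m = [2,1,0] := by
    apply S19.perm012 m _ hc0m.1 hc1m.1 hc2pm.2
    intro a ha
    have haL : a ∈ L := by
      rw [hL2]
      exact List.mem_append.mpr (Or.inr (List.mem_cons_of_mem _
        (List.mem_append.mpr (Or.inl ha))))
    have h5 := hA a haL
    have h3' : a ≠ 3 := S19.ne_of_notmem h3nm a ha
    have h4' : a ≠ 4 := S19.ne_of_notmem h4nm a ha
    omega
  -- final case analysis
  have hv : v = FreeMonoid.ofList L := (FreeMonoid.ofList_toList v).symm
  subst hq2
  rcases hps with hp | hp <;> subst hp <;>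
    rcases hms with hm | hm | hm | hm | hm | hm <;> subst hm <;>
      first
        | (rw [hv, hL2]; rfl)
        | (have hT := hFW S19.gT1; rw [hL2] at hT; exact absurd hT (by decide))
        | (have hT := hFW S19.gT2; rw [hL2] at hT; exact absurd hT (by decide))
        | (have hT := hKM S19.gTK; rw [hL2] at hT; exact absurd hT (by decide))
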